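/- arXiv:2011.10690 — 3 statements merged into one kernel-verified Lean document; each statement's English description precedes it below -/
import Mathlib

section
/- Let (Ω, P) be a probability space with a filtration F₀ ⊆ F₁ ⊆ ⋯ ⊆ Fₙ, and let d₁, …, dₙ be real-valued random variables such that each dₜ is Fₜ-measurable, E[dₜ | Fₜ₋₁] = 0 almost surely, and for every real λ with |λ| < 1/b one has E[exp(λ dₜ) | Fₜ₋₁] ≤ exp(λ²v²/2) almost surely, where v > 0 and b > 0 (with exp(λdₜ) integrable for such λ). Then for every ε ≥ 0, P(|Σₜ₌₁ⁿ dₜ| ≥ n·ε) ≤ 2·exp(−n·min(ε²/(2v²), ε/(2b))). -/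
open MeasureTheory Real

section Aux

variable {Ω : Type*} {m0 : MeasurableSpace Ω}

/-- If `g ≥ 0` is `m'`-measurable and integrable, `f ≥ 0` is integrable with
`E[f | m'] ≤ C` a.e., then `g * f` is integrable and `∫ g f ≤ C ∫ g`. -/
lemma aux_integrable_mul_of_condexp_le {P : Measure Ω} [IsProbabilityMeasure P]
    {m' : MeasurableSpace Ω} (hm : m' ≤ m0)
    {g f : Ω → ℝ} (hg_meas : Measurable[m'] g) (hg0 : ∀ ω, 0 ≤ g ω)
    (hgi : Integrable g P) (hf0 : ∀ ω, 0 ≤ f ω) (hfi : Integrable f P)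
    {C : ℝ} (hC : 0 ≤ C) (hcond : ∀ᵐ ω ∂P, (P[f | m']) ω ≤ C) :
    Integrable (fun ω => g ω * f ω) P ∧
      ∫ ω, g ω * f ω ∂P ≤ C * ∫ ω, g ω ∂P := by
  set gk : ℕ → Ω → ℝ := fun k ω => min (g ω) k with hgk_def
  have hgk_meas : ∀ k, Measurable[m'] (gk k) := fun k =>
    hg_meas.min measurable_const
  have hgk0 : ∀ k ω, 0 ≤ gk k ω := fun k ω => le_min (hg0 ω) (Nat.cast_nonneg k)
  have hgk_bdd : ∀ k ω, ‖gk k ω‖ ≤ (k : ℝ) := by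
    intro k ω
    rw [Real.norm_eq_abs, abs_of_nonneg (hgk0 k ω)]
    exact min_le_right _ _
  have hgk_int : ∀ k, Integrable (gk k) P := fun k =>
    (integrable_const (k : ℝ)).mono' ((hgk_meas k).mono hm le_rfl).stronglyMeasurable.aestronglyMeasurable
      (Filter.Eventually.of_forall (hgk_bdd k))
  have hgf_int : ∀ k, Integrable (fun ω => gk k ω * f ω) P := fun k =>
    hfi.bdd_mul ((hgk_meas k).mono hm le_rfl).stronglyMeasurable.aestronglyMeasurable (Filter.Eventually.of_forall (hgk_bdd k))
  have key : ∀ k, ∫ ω, gk k ω * f ω ∂P ≤ C * ∫ ω, g ω ∂P := by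
    intro k
    have h1 : ∫ ω, gk k ω * f ω ∂P = ∫ ω, gk k ω * (P[f | m']) ω ∂P := by
      rw [← integral_condExp hm (f := fun ω => gk k ω * f ω)]
      refine integral_congr_ae ?_
      exact condExp_mul_of_stronglyMeasurable_left (hgk_meas k).stronglyMeasurable (hgf_int k) hfi
    have h2 : ∫ ω, gk k ω * (P[f | m']) ω ∂P ≤ ∫ ω, gk k ω * C ∂P := by
      refine integral_mono_ae
        (integrable_condExp.bdd_mul ((hgk_meas k).mono hm le_rfl).stronglyMeasurable.aestronglyMeasurable
          (Filter.Eventually.of_forall (hgk_bdd k))) ((hgk_int k).mul_const C) ?_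
      filter_upwards [hcond] with ω hω
      exact mul_le_mul_of_nonneg_left hω (hgk0 k ω)
    have h3 : ∫ ω, gk k ω * C ∂P = C * ∫ ω, gk k ω ∂P := by
      rw [integral_mul_const, mul_comm]
    have h4 : ∫ ω, gk k ω ∂P ≤ ∫ ω, g ω ∂P :=
      integral_mono (hgk_int k) hgi fun ω => min_le_left _ _
    calc ∫ ω, gk k ω * f ω ∂P ≤ ∫ ω, gk k ω * C ∂P := h1 ▸ h2
      _ = C * ∫ ω, gk k ω ∂P := h3
      _ ≤ C * ∫ ω, g ω ∂P := mul_le_mul_of_nonneg_left h4 hC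
  have hmono : ∀ ω, Monotone fun k : ℕ => ENNReal.ofReal (gk k ω * f ω) := by
    intro ω k j hkj
    exact ENNReal.ofReal_le_ofReal
      (mul_le_mul_of_nonneg_right (min_le_min le_rfl (Nat.cast_le.2 hkj)) (hf0 ω))
  have hsup : ∀ ω, (⨆ k : ℕ, ENNReal.ofReal (gk k ω * f ω))
      = ENNReal.ofReal (g ω * f ω) := by
    intro ω
    obtain ⟨k0, hk0⟩ := exists_nat_ge (g ω)
    refine le_antisymm (iSup_le fun k => ENNReal.ofReal_le_ofReal
      (mul_le_mul_of_nonneg_right (min_le_left _ _) (hf0 ω))) ?_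
    refine le_iSup_of_le k0 (le_of_eq ?_)
    simp only [hgk_def, min_eq_left hk0]
  have hlin : ∫⁻ ω, ENNReal.ofReal (g ω * f ω) ∂P
      ≤ ENNReal.ofReal (C * ∫ ω, g ω ∂P) := by
    calc ∫⁻ ω, ENNReal.ofReal (g ω * f ω) ∂P
        = ∫⁻ ω, ⨆ k : ℕ, ENNReal.ofReal (gk k ω * f ω) ∂P :=
          lintegral_congr fun ω => (hsup ω).symm
      _ = ⨆ k : ℕ, ∫⁻ ω, ENNReal.ofReal (gk k ω * f ω) ∂P :=
          lintegral_iSup' (fun k => ((hgf_int k).1.aemeasurable).ennreal_ofReal)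
            (Filter.Eventually.of_forall fun ω => hmono ω)
      _ ≤ ENNReal.ofReal (C * ∫ ω, g ω ∂P) := by
          refine iSup_le fun k => ?_
          rw [← ofReal_integral_eq_lintegral_ofReal (hgf_int k)
            (Filter.Eventually.of_forall fun ω => mul_nonneg (hgk0 k ω) (hf0 ω))]
          exact ENNReal.ofReal_le_ofReal (key k)
  have hmeas : @AEStronglyMeasurable Ω ℝ _ m0 m0 (fun ω => g ω * f ω) P :=
    ((hg_meas.mono hm le_rfl).stronglyMeasurable.aestronglyMeasurable).mul hfi.1
  have h0 : 0 ≤ᵐ[P] fun ω => g ω * f ω :=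
    Filter.Eventually.of_forall fun ω => mul_nonneg (hg0 ω) (hf0 ω)
  have hint : Integrable (fun ω => g ω * f ω) P := by
    refine ⟨hmeas, ?_⟩
    rw [hasFiniteIntegral_iff_ofReal h0]
    exact lt_of_le_of_lt hlin ENNReal.ofReal_lt_top
  refine ⟨hint, ?_⟩
  have hnn : 0 ≤ C * ∫ ω, g ω ∂P := mul_nonneg hC (integral_nonneg hg0)
  rw [← ENNReal.toReal_ofReal hnn, integral_eq_lintegral_of_nonneg_ae h0 hmeas]
  exact ENNReal.toReal_mono ENNReal.ofReal_ne_top hlin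

/-- One-sided Bernstein tail bound from a uniform mgf bound on `[0, 1/b)`. -/
lemma aux_onesided {P : Measure Ω} [IsProbabilityMeasure P] (n : ℕ) (X : Ω → ℝ)
    (v b : ℝ) (hv : 0 < v) (hb : 0 < b)
    (hX : ∀ l : ℝ, 0 ≤ l → l < 1 / b →
      Integrable (fun ω => Real.exp (l * X ω)) P ∧
      ∫ ω, Real.exp (l * X ω) ∂P ≤ Real.exp ((n : ℝ) * (l ^ 2 * v ^ 2 / 2)))
    (ε : ℝ) (hε : 0 ≤ ε) :
    P {ω | (n : ℝ) * ε ≤ X ω} ≤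
      ENNReal.ofReal
        (Real.exp (-(n : ℝ) * min (ε ^ 2 / (2 * v ^ 2)) (ε / (2 * b)))) := by
  have hv2 : (0 : ℝ) < v ^ 2 := by positivity
  set lstar : ℝ := min (ε / v ^ 2) (1 / b) with hlstar_def
  have hlstar0 : 0 ≤ lstar := le_min (by positivity) (by positivity)
  have hlstar_le : lstar ≤ 1 / b := min_le_right _ _
  set lam : ℕ → ℝ := fun j => (1 - ((j : ℝ) + 1)⁻¹) * lstar with hlam_def
  have hfac0 : ∀ j : ℕ, 0 ≤ 1 - ((j : ℝ) + 1)⁻¹ := by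
    intro j
    have : ((j : ℝ) + 1)⁻¹ ≤ 1 := by
      rw [inv_le_one_iff₀]
      right; linarith [Nat.cast_nonneg (α := ℝ) j]
    linarith
  have hfac1 : ∀ j : ℕ, 1 - ((j : ℝ) + 1)⁻¹ < 1 := by
    intro j
    have : (0 : ℝ) < ((j : ℝ) + 1)⁻¹ := by positivity
    linarith
  have hlam0 : ∀ j, 0 ≤ lam j := fun j => mul_nonneg (hfac0 j) hlstar0
  have hlam_lt : ∀ j, lam j < 1 / b := by
    intro j
    rcases hlstar0.eq_or_lt with h | h
    · simp only [hlam_def, ← h, mul_zero]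
      positivity
    · calc lam j < 1 * lstar := by
            exact mul_lt_mul_of_pos_right (hfac1 j) h
        _ = lstar := one_mul _
        _ ≤ 1 / b := hlstar_le
  -- Chernoff bound for each lam j
  have hbound : ∀ j, P {ω | (n : ℝ) * ε ≤ X ω} ≤
      ENNReal.ofReal
        (Real.exp (-(lam j) * ((n : ℝ) * ε) + (n : ℝ) * ((lam j) ^ 2 * v ^ 2 / 2))) := by
    intro j
    obtain ⟨hint, hle⟩ := hX (lam j) (hlam0 j) (hlam_lt j)
    have hch := ProbabilityTheory.measure_ge_le_exp_mul_mgf (μ := P) (X := X)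
      ((n : ℝ) * ε) (hlam0 j) hint
    have hmgf : ProbabilityTheory.mgf X P (lam j)
        ≤ Real.exp ((n : ℝ) * ((lam j) ^ 2 * v ^ 2 / 2)) := hle
    have htr : (P {ω | (n : ℝ) * ε ≤ X ω}).toReal ≤
        Real.exp (-(lam j) * ((n : ℝ) * ε) + (n : ℝ) * ((lam j) ^ 2 * v ^ 2 / 2)) := by
      calc (P {ω | (n : ℝ) * ε ≤ X ω}).toReal
          ≤ Real.exp (-(lam j) * ((n : ℝ) * ε)) * ProbabilityTheory.mgf X P (lam j) := hch
        _ ≤ Real.exp (-(lam j) * ((n : ℝ) * ε)) *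
              Real.exp ((n : ℝ) * ((lam j) ^ 2 * v ^ 2 / 2)) :=
            mul_le_mul_of_nonneg_left hmgf (Real.exp_pos _).le
        _ = Real.exp (-(lam j) * ((n : ℝ) * ε) + (n : ℝ) * ((lam j) ^ 2 * v ^ 2 / 2)) :=
            (Real.exp_add _ _).symm
    rw [← ENNReal.ofReal_toReal (measure_ne_top P _)]
    exact ENNReal.ofReal_le_ofReal htr
  -- pass to the limit lam j → lstar
  have hlam_tendsto : Filter.Tendsto lam Filter.atTop (nhds lstar) := by
    have h1 : Filter.Tendsto (fun j : ℕ => ((j : ℝ) + 1)⁻¹) Filter.atTop (nhds 0) := by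
      simpa [one_div] using tendsto_one_div_add_atTop_nhds_zero_nat (𝕜 := ℝ)
    have h2 : Filter.Tendsto (fun j : ℕ => (1 - ((j : ℝ) + 1)⁻¹) * lstar)
        Filter.atTop (nhds ((1 - 0) * lstar)) :=
      (Filter.Tendsto.sub tendsto_const_nhds h1).mul tendsto_const_nhds
    simpa using h2
  have hcont : Continuous fun l : ℝ =>
      ENNReal.ofReal (Real.exp (-l * ((n : ℝ) * ε) + (n : ℝ) * (l ^ 2 * v ^ 2 / 2))) := by
    apply ENNReal.continuous_ofReal.comp
    apply Real.continuous_exp.comp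
    exact (continuous_neg.mul continuous_const).add
      (continuous_const.mul (((continuous_pow 2).mul continuous_const).div_const 2))
  have hlim : Filter.Tendsto (fun j => ENNReal.ofReal
      (Real.exp (-(lam j) * ((n : ℝ) * ε) + (n : ℝ) * ((lam j) ^ 2 * v ^ 2 / 2))))
      Filter.atTop (nhds (ENNReal.ofReal
        (Real.exp (-lstar * ((n : ℝ) * ε) + (n : ℝ) * (lstar ^ 2 * v ^ 2 / 2))))) :=
    (hcont.tendsto lstar).comp hlam_tendsto
  have hPle : P {ω | (n : ℝ) * ε ≤ X ω} ≤
      ENNReal.ofReal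
        (Real.exp (-lstar * ((n : ℝ) * ε) + (n : ℝ) * (lstar ^ 2 * v ^ 2 / 2))) :=
    ge_of_tendsto hlim (Filter.Eventually.of_forall hbound)
  refine hPle.trans (ENNReal.ofReal_le_ofReal (Real.exp_le_exp.2 ?_))
  -- real-number inequality at the optimal point
  have hn0 : (0 : ℝ) ≤ (n : ℝ) := Nat.cast_nonneg n
  rcases le_total (ε / v ^ 2) (1 / b) with hcase | hcase
  · have hεb : ε * b ≤ v ^ 2 := by
      rw [div_le_div_iff₀ hv2 hb] at hcase
      linarith
    have hl : lstar = ε / v ^ 2 := min_eq_left hcase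
    have hmin : min (ε ^ 2 / (2 * v ^ 2)) (ε / (2 * b)) = ε ^ 2 / (2 * v ^ 2) := by
      refine min_eq_left ?_
      rw [div_le_div_iff₀ (by positivity) (by positivity)]
      nlinarith
    rw [hl, hmin]
    have : -(ε / v ^ 2) * ((n : ℝ) * ε) + (n : ℝ) * ((ε / v ^ 2) ^ 2 * v ^ 2 / 2)
        = -(n : ℝ) * (ε ^ 2 / (2 * v ^ 2)) := by
      field_simp
      ring
    linarith [this.le, this.ge]
  · have hεb : v ^ 2 ≤ ε * b := by
      rw [div_le_div_iff₀ hb hv2] at hcase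
      linarith
    have hl : lstar = 1 / b := min_eq_right hcase
    have hmin : min (ε ^ 2 / (2 * v ^ 2)) (ε / (2 * b)) = ε / (2 * b) := by
      refine min_eq_right ?_
      rw [div_le_div_iff₀ (by positivity) (by positivity)]
      nlinarith
    rw [hl, hmin]
    have hkey : (n : ℝ) * ((1 / b) ^ 2 * v ^ 2 / 2) ≤ (n : ℝ) * (ε / (2 * b)) := by
      refine mul_le_mul_of_nonneg_left ?_ hn0
      have he : (1 / b) ^ 2 * v ^ 2 / 2 = v ^ 2 / (2 * b ^ 2) := by ring
      rw [he, div_le_div_iff₀ (by positivity) (by positivity)]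
      nlinarith
    have he1 : -(1 / b) * ((n : ℝ) * ε) + (n : ℝ) * (ε / (2 * b))
        = -(n : ℝ) * (ε / (2 * b)) := by
      field_simp
      ring
    linarith [hkey, he1.le, he1.ge]

end Aux

/-- Azuma–Bernstein-type concentration inequality for martingale-difference
sequences with conditionally sub-exponential increments. -/
theorem martingale_difference_subexponential_concentration
    {Ω : Type*} {m0 : MeasurableSpace Ω} (P : Measure Ω) [IsProbabilityMeasure P]
    (n : ℕ) (ℱ : Filtration ℕ m0) (d : ℕ → Ω → ℝ)
    (hAdapted : ∀ t ∈ Finset.Icc 1 n, Measurable[ℱ t] (d t))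
    (hMDS : ∀ t ∈ Finset.Icc 1 n, P[d t | ℱ (t - 1)] =ᵐ[P] 0)
    (v b : ℝ) (hv : 0 < v) (hb : 0 < b)
    (hInt : ∀ t ∈ Finset.Icc 1 n, ∀ l : ℝ, |l| < 1 / b →
      Integrable (fun ω => Real.exp (l * d t ω)) P)
    (hMGF : ∀ t ∈ Finset.Icc 1 n, ∀ l : ℝ, |l| < 1 / b →
      ∀ᵐ ω ∂P, (P[fun ω' => Real.exp (l * d t ω') | ℱ (t - 1)]) ω ≤
        Real.exp (l ^ 2 * v ^ 2 / 2)) :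
    ∀ ε : ℝ, 0 ≤ ε →
      P {ω | (n : ℝ) * ε ≤ |∑ t ∈ Finset.Icc 1 n, d t ω|} ≤
        ENNReal.ofReal
          (2 * Real.exp (-(n : ℝ) * min (ε ^ 2 / (2 * v ^ 2)) (ε / (2 * b)))) := by
  -- MGF bound for partial sums, by induction.
  have hind : ∀ l : ℝ, |l| < 1 / b → ∀ m : ℕ, m ≤ n →
      Integrable (fun ω => Real.exp (l * ∑ t ∈ Finset.Icc 1 m, d t ω)) P ∧
      ∫ ω, Real.exp (l * ∑ t ∈ Finset.Icc 1 m, d t ω) ∂P ≤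
        Real.exp ((m : ℝ) * (l ^ 2 * v ^ 2 / 2)) := by
    intro l hl m
    induction m with
    | zero =>
      intro _
      constructor
      · simpa using integrable_const (1 : ℝ)
      · simp
    | succ m ih =>
      intro hm1
      obtain ⟨ih1, ih2⟩ := ih (Nat.le_of_succ_le hm1)
      have hmem : m + 1 ∈ Finset.Icc 1 n :=
        Finset.mem_Icc.2 ⟨Nat.succ_le_succ (Nat.zero_le m), hm1⟩
      have hSmeas : Measurable[ℱ m] fun ω => ∑ t ∈ Finset.Icc 1 m, d t ω := by
        apply Finset.measurable_sum
        intro t ht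
        obtain ⟨ht1, ht2⟩ := Finset.mem_Icc.1 ht
        exact (hAdapted t (Finset.mem_Icc.2
          ⟨ht1, le_trans ht2 (Nat.le_of_succ_le hm1)⟩)).mono (ℱ.mono ht2) le_rfl
      have hcond : ∀ᵐ ω ∂P,
          (P[fun ω' => Real.exp (l * d (m + 1) ω') | ℱ m]) ω ≤
            Real.exp (l ^ 2 * v ^ 2 / 2) := by
        simpa using hMGF (m + 1) hmem l hl
      obtain ⟨hint', hle'⟩ := aux_integrable_mul_of_condexp_le (ℱ.le m)
        (Real.measurable_exp.comp (hSmeas.const_mul l))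
        (fun ω => (Real.exp_pos _).le) ih1 (fun ω => (Real.exp_pos _).le)
        (hInt (m + 1) hmem l hl) (Real.exp_pos _).le hcond
      have heq : (fun ω => Real.exp (l * ∑ t ∈ Finset.Icc 1 (m + 1), d t ω))
          = fun ω => Real.exp (l * ∑ t ∈ Finset.Icc 1 m, d t ω) *
              Real.exp (l * d (m + 1) ω) := by
        funext ω
        rw [Finset.sum_Icc_succ_top (Nat.succ_le_succ (Nat.zero_le m)), mul_add,
          Real.exp_add]
      constructor
      · rw [heq]; exact hint'
      · rw [heq]
        calc ∫ ω, Real.exp (l * ∑ t ∈ Finset.Icc 1 m, d t ω) *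
              Real.exp (l * d (m + 1) ω) ∂P
            ≤ Real.exp (l ^ 2 * v ^ 2 / 2) *
                ∫ ω, Real.exp (l * ∑ t ∈ Finset.Icc 1 m, d t ω) ∂P := hle'
          _ ≤ Real.exp (l ^ 2 * v ^ 2 / 2) *
                Real.exp ((m : ℝ) * (l ^ 2 * v ^ 2 / 2)) :=
              mul_le_mul_of_nonneg_left ih2 (Real.exp_pos _).le
          _ = Real.exp (((m : ℕ) + 1 : ℝ) * (l ^ 2 * v ^ 2 / 2)) := by
              rw [← Real.exp_add]; ring_nf
          _ = Real.exp (((m + 1 : ℕ) : ℝ) * (l ^ 2 * v ^ 2 / 2)) := by push_cast; ring_nf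
  intro ε hε
  set S : Ω → ℝ := fun ω => ∑ t ∈ Finset.Icc 1 n, d t ω with hS_def
  have h1 : P {ω | (n : ℝ) * ε ≤ S ω} ≤
      ENNReal.ofReal
        (Real.exp (-(n : ℝ) * min (ε ^ 2 / (2 * v ^ 2)) (ε / (2 * b)))) := by
    refine aux_onesided n S v b hv hb ?_ ε hε
    intro l hl0 hlb
    have := hind l (by rwa [abs_of_nonneg hl0]) n le_rfl
    exact this
  have h2 : P {ω | (n : ℝ) * ε ≤ -S ω} ≤
      ENNReal.ofReal
        (Real.exp (-(n : ℝ) * min (ε ^ 2 / (2 * v ^ 2)) (ε / (2 * b)))) := by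
    refine aux_onesided n (fun ω => -S ω) v b hv hb ?_ ε hε
    intro l hl0 hlb
    have hl' : |(-l)| < 1 / b := by rwa [abs_neg, abs_of_nonneg hl0]
    obtain ⟨hint, hle⟩ := hind (-l) hl' n le_rfl
    have heq : (fun ω => Real.exp (l * -S ω)) = fun ω => Real.exp (-l * S ω) := by
      funext ω; ring_nf
    constructor
    · rw [heq]; exact hint
    · rw [heq]
      calc ∫ ω, Real.exp (-l * S ω) ∂P
          ≤ Real.exp ((n : ℝ) * ((-l) ^ 2 * v ^ 2 / 2)) := hle
        _ = Real.exp ((n : ℝ) * (l ^ 2 * v ^ 2 / 2)) := by rw [neg_pow]; ring_nf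
  have hsub : {ω | (n : ℝ) * ε ≤ |S ω|} ⊆
      {ω | (n : ℝ) * ε ≤ S ω} ∪ {ω | (n : ℝ) * ε ≤ -S ω} := by
    intro ω hω
    simp only [Set.mem_setOf_eq] at hω ⊢
    rcases le_abs.1 hω with h | h
    · exact Or.inl h
    · exact Or.inr h
  calc P {ω | (n : ℝ) * ε ≤ |S ω|}
      ≤ P ({ω | (n : ℝ) * ε ≤ S ω} ∪ {ω | (n : ℝ) * ε ≤ -S ω}) := measure_mono hsub
    _ ≤ P {ω | (n : ℝ) * ε ≤ S ω} + P {ω | (n : ℝ) * ε ≤ -S ω} := measure_union_le _ _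
    _ ≤ ENNReal.ofReal
          (Real.exp (-(n : ℝ) * min (ε ^ 2 / (2 * v ^ 2)) (ε / (2 * b)))) +
        ENNReal.ofReal
          (Real.exp (-(n : ℝ) * min (ε ^ 2 / (2 * v ^ 2)) (ε / (2 * b)))) :=
      add_le_add h1 h2
    _ = ENNReal.ofReal
          (2 * Real.exp (-(n : ℝ) * min (ε ^ 2 / (2 * v ^ 2)) (ε / (2 * b)))) := by
        rw [← ENNReal.ofReal_add (Real.exp_pos _).le (Real.exp_pos _).le]
        congr 1
        ring
end

section
/- Let (Ω, P) be a probability space and X₁, …, Xₙ independent real-valued random variables, each with mean μ(θ⁰) and each satisfying E[exp(λ(Xᵢ − μ(θ⁰)))] ≤ exp(λ²v²/2) for all real λ with |λ| < 1/b, where v > 0 and b > 0 (with exp(λ(Xᵢ − μ(θ⁰))) integrable for such λ). Let Θ be a finite set with θ⁰ ∈ Θ and μ : Θ → ℝ, and let c > 0 satisfy |μ(θ) − μ(θ⁰)| ≥ c for every θ ≠ θ⁰. Define Ψ(c) := min(c²/(8v²), c/(4b)), let M > 0 and T > 0 be reals with 2MTΨ(c) ≥ e, set L := log(2MTΨ(c)),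 and suppose n > L/Ψ(c). Define Φ := max(√(2v²L/n), 2bL/n) and the empirical mean S̄ := (1/n)·Σᵢ₌₁ⁿ Xᵢ. Then P({θ ∈ Θ : |S̄ − μ(θ)| ≤ Φ} = {θ⁰}) ≥ 1 − 1/(MTΨ(c)). -/
open MeasureTheory Real ProbabilityTheory Filter Set

lemma tail_aux {Ω : Type*} [MeasurableSpace Ω] (P : Measure Ω) [IsProbabilityMeasure P]
    (n : ℕ) (Y : Fin n → Ω → ℝ) (hY : ∀ i, Measurable (Y i))
    (hIndep : iIndepFun Y P)
    (v b : ℝ) (hb : 0 < b)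
    (hInt : ∀ i, ∀ l : ℝ, |l| < 1 / b → Integrable (fun ω => Real.exp (l * Y i ω)) P)
    (hMGF : ∀ i, ∀ l : ℝ, |l| < 1 / b → mgf (Y i) P l ≤ Real.exp (l ^ 2 * v ^ 2 / 2))
    (t : ℝ) (ht0 : 0 ≤ t) (ht : t < 1 / b) (a : ℝ) :
    (P {ω | a ≤ ∑ i, Y i ω}).toReal ≤ Real.exp (-t * a + n * (t ^ 2 * v ^ 2 / 2)) := by
  have habs : |t| < 1 / b := by rwa [abs_of_nonneg ht0]
  have h_int : Integrable (fun ω => Real.exp (t * (∑ i, Y i) ω)) P :=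
    hIndep.integrable_exp_mul_sum hY (fun i _ => hInt i t habs)
  have h1 := measure_ge_le_exp_mul_mgf (X := ∑ i, Y i) (μ := P) a ht0 h_int
  have h2 : mgf (∑ i, Y i) P t ≤ Real.exp ((n : ℝ) * (t ^ 2 * v ^ 2 / 2)) := by
    rw [hIndep.mgf_sum hY]
    calc ∏ i, mgf (Y i) P t ≤ ∏ _i : Fin n, Real.exp (t ^ 2 * v ^ 2 / 2) :=
          Finset.prod_le_prod (fun i _ => mgf_nonneg) (fun i _ => hMGF i t habs)
      _ = Real.exp ((n : ℝ) * (t ^ 2 * v ^ 2 / 2)) := by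
          rw [Finset.prod_const, Finset.card_univ, Fintype.card_fin, ← Real.exp_nat_mul]
  calc (P {ω | a ≤ ∑ i, Y i ω}).toReal
      = (P {ω | a ≤ (∑ i, Y i) ω}).toReal := by simp [Finset.sum_apply]
    _ ≤ Real.exp (-t * a) * mgf (∑ i, Y i) P t := h1
    _ ≤ Real.exp (-t * a) * Real.exp ((n : ℝ) * (t ^ 2 * v ^ 2 / 2)) := by
        exact mul_le_mul_of_nonneg_left h2 (Real.exp_pos _).le
    _ = Real.exp (-t * a + n * (t ^ 2 * v ^ 2 / 2)) := by rw [← Real.exp_add]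

lemma le_of_lt_bound {h : ℝ → ℝ} (hcont : Continuous h) {C B : ℝ} (hB : 0 < B)
    (H : ∀ t, 0 ≤ t → t < B → C ≤ h t) : C ≤ h B := by
  refine ge_of_tendsto (hcont.continuousWithinAt (s := Set.Iio B) (x := B)) ?_
  filter_upwards [self_mem_nhdsWithin,
    mem_nhdsWithin_of_mem_nhds (Ioi_mem_nhds hB)] with t ht1 ht2
  exact H t (le_of_lt ht2) ht1

lemma tail_opt {Ω : Type*} [MeasurableSpace Ω] (P : Measure Ω) [IsProbabilityMeasure P]
    (n : ℕ) (Y : Fin n → Ω → ℝ) (hY : ∀ i, Measurable (Y i))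
    (hIndep : iIndepFun Y P)
    (v b : ℝ) (hv : 0 < v) (hb : 0 < b)
    (hInt : ∀ i, ∀ l : ℝ, |l| < 1 / b → Integrable (fun ω => Real.exp (l * Y i ω)) P)
    (hMGF : ∀ i, ∀ l : ℝ, |l| < 1 / b → mgf (Y i) P l ≤ Real.exp (l ^ 2 * v ^ 2 / 2))
    (L Φ : ℝ) (hL0 : 0 ≤ L) (hn : 0 < (n : ℝ))
    (hΦ1 : 2 * v ^ 2 * L / n ≤ Φ ^ 2) (hΦ2 : 2 * b * L / n ≤ Φ) (hΦpos : 0 < Φ) :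
    (P {ω | (n : ℝ) * Φ ≤ ∑ i, Y i ω}).toReal ≤ Real.exp (-L) := by
  set C := (P {ω | (n : ℝ) * Φ ≤ ∑ i, Y i ω}).toReal with hC
  have key : ∀ t, 0 ≤ t → t < 1 / b →
      C ≤ Real.exp (-t * ((n : ℝ) * Φ) + n * (t ^ 2 * v ^ 2 / 2)) :=
    fun t ht0 ht => tail_aux P n Y hY hIndep v b hb hInt hMGF t ht0 ht _
  have hv2 : (0 : ℝ) < v ^ 2 := by positivity
  have h1 : 2 * v ^ 2 * L ≤ n * Φ ^ 2 := by
    have := (div_le_iff₀ hn).mp hΦ1; linarith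
  have h2 : 2 * b * L ≤ n * Φ := by
    have := (div_le_iff₀ hn).mp hΦ2; linarith
  by_cases hcase : Φ / v ^ 2 < 1 / b
  · have ht0 : 0 ≤ Φ / v ^ 2 := by positivity
    refine (key _ ht0 hcase).trans (Real.exp_le_exp.mpr ?_)
    have heq : -(Φ / v ^ 2) * ((n : ℝ) * Φ) + n * ((Φ / v ^ 2) ^ 2 * v ^ 2 / 2)
        = -(n * Φ ^ 2 / (2 * v ^ 2)) := by field_simp; ring
    rw [heq, neg_le_neg_iff, le_div_iff₀ (by positivity)]
    linarith
  · push_neg at hcase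
    have hvb : v ^ 2 ≤ b * Φ := by
      rw [div_le_div_iff₀ (by positivity) hv2] at hcase; linarith
    have hcont : Continuous (fun t : ℝ =>
        Real.exp (-t * ((n : ℝ) * Φ) + n * (t ^ 2 * v ^ 2 / 2))) := by continuity
    have hCb := le_of_lt_bound hcont (by positivity : (0:ℝ) < 1 / b) key
    refine hCb.trans (Real.exp_le_exp.mpr ?_)
    have hb2 : (0:ℝ) < b ^ 2 := by positivity
    have : (n : ℝ) * ((1 / b) ^ 2 * v ^ 2 / 2) ≤ n * Φ / (2 * b) := by
      have hnv : (n : ℝ) * v ^ 2 ≤ n * (b * Φ) := by nlinarith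
      calc (n : ℝ) * ((1 / b) ^ 2 * v ^ 2 / 2) = n * v ^ 2 / (2 * b ^ 2) := by ring
        _ ≤ n * (b * Φ) / (2 * b ^ 2) := by gcongr
        _ = n * Φ / (2 * b) := by field_simp
    have hfin : -(1 / b) * ((n : ℝ) * Φ) + n * Φ / (2 * b) ≤ -L := by
      have : -(1 / b) * ((n : ℝ) * Φ) + n * Φ / (2 * b) = -(n * Φ / (2 * b)) := by
        field_simp; ring
      rw [this, neg_le_neg_iff, le_div_iff₀ (by positivity)]
      linarith
    linarith

set_option maxHeartbeats 1000000 in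
/-- Fixed-design version of Theorem 1: once the number of observations exceeds
the demand identification volume `log(2MTΨ(c))/Ψ(c)`, the ambiguity set equals
the singleton `{θ⁰}` with probability at least `1 − 1/(MTΨ(c))`. -/
theorem ambiguity_set_is_singleton_whp
    {Ω : Type*} [MeasurableSpace Ω] (P : Measure Ω) [IsProbabilityMeasure P]
    (n : ℕ) (X : Fin n → Ω → ℝ) (hX : ∀ i, Measurable (X i))
    (hIndep : iIndepFun X P)
    {Θ : Type*} [Fintype Θ] (θ0 : Θ) (μ : Θ → ℝ)
    (hMean : ∀ i, (∫ ω, X i ω ∂P) = μ θ0)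
    (v b : ℝ) (hv : 0 < v) (hb : 0 < b)
    (hInt : ∀ i, ∀ l : ℝ, |l| < 1 / b →
      Integrable (fun ω => Real.exp (l * (X i ω - μ θ0))) P)
    (hMGF : ∀ i, ∀ l : ℝ, |l| < 1 / b →
      (∫ ω, Real.exp (l * (X i ω - μ θ0)) ∂P) ≤ Real.exp (l ^ 2 * v ^ 2 / 2))
    (c : ℝ) (hc : 0 < c) (hsep : ∀ θ : Θ, θ ≠ θ0 → c ≤ |μ θ - μ θ0|)
    (Ψ : ℝ) (hΨ : Ψ = min (c ^ 2 / (8 * v ^ 2)) (c / (4 * b)))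
    (M T : ℝ) (hM : 0 < M) (hT : 0 < T) (hMT : Real.exp 1 ≤ 2 * M * T * Ψ)
    (L : ℝ) (hL : L = Real.log (2 * M * T * Ψ))
    (hn : (n : ℝ) > L / Ψ)
    (Φ : ℝ) (hΦ : Φ = max (Real.sqrt (2 * v ^ 2 * L / n)) (2 * b * L / n)) :
    P {ω | {θ : Θ | |(1 / (n : ℝ)) * (∑ i, X i ω) - μ θ| ≤ Φ} = {θ0}} ≥
      1 - ENNReal.ofReal (1 / (M * T * Ψ)) := by
  classical
  -- basic positivity facts
  have hΨpos : 0 < Ψ := by rw [hΨ]; exact lt_min (by positivity) (by positivity)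
  have hMTΨ : (0:ℝ) < 2 * M * T * Ψ := by positivity
  have hL1 : 1 ≤ L := by rw [hL, Real.le_log_iff_exp_le hMTΨ]; exact hMT
  have hL0 : (0:ℝ) < L := lt_of_lt_of_le one_pos hL1
  have hnpos : 0 < (n:ℝ) := lt_trans (div_pos hL0 hΨpos) hn
  have hLn : L < (n:ℝ) * Ψ := by rw [gt_iff_lt, div_lt_iff₀ hΨpos] at hn; linarith
  have hΨ1 : Ψ ≤ c ^ 2 / (8 * v ^ 2) := by rw [hΨ]; exact min_le_left _ _
  have hΨ2 : Ψ ≤ c / (4 * b) := by rw [hΨ]; exact min_le_right _ _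
  have hv2 : (0:ℝ) < v ^ 2 := by positivity
  -- properties of Φ
  have hΦ2' : 2 * b * L / (n:ℝ) ≤ Φ := by
    have h := le_max_right (Real.sqrt (2 * v ^ 2 * L / n)) (2 * b * L / (n:ℝ))
    rwa [← hΦ] at h
  have hΦ1' : 2 * v ^ 2 * L / (n:ℝ) ≤ Φ ^ 2 := by
    have h := le_max_left (Real.sqrt (2 * v ^ 2 * L / n)) (2 * b * L / (n:ℝ))
    rw [← hΦ] at h
    have hx : (0:ℝ) ≤ 2 * v ^ 2 * L / n := by positivity
    nlinarith [Real.sq_sqrt hx, Real.sqrt_nonneg (2 * v ^ 2 * L / (n:ℝ))]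
  have hΦpos : 0 < Φ :=
    lt_of_lt_of_le (div_pos (by positivity) hnpos) hΦ2'
  have hΦc : 2 * Φ < c := by
    have hc2 : (0:ℝ) < c / 2 := by positivity
    have hLnn : L / (n:ℝ) < Ψ := by rw [div_lt_iff₀ hnpos]; linarith
    have h8 : Ψ * (8 * v ^ 2) ≤ c ^ 2 := by
      rw [le_div_iff₀ (by positivity)] at hΨ1; exact hΨ1
    have h4 : Ψ * (4 * b) ≤ c := by
      rw [le_div_iff₀ (by positivity)] at hΨ2; exact hΨ2
    have h1 : Real.sqrt (2 * v ^ 2 * L / n) < c / 2 := by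
      rw [Real.sqrt_lt' hc2]
      have heq : 2 * v ^ 2 * L / (n:ℝ) = 2 * v ^ 2 * (L / n) := by ring
      have hm := mul_lt_mul_of_pos_left hLnn (by positivity : (0:ℝ) < 2 * v ^ 2)
      have hfin : 2 * v ^ 2 * Ψ ≤ (c / 2) ^ 2 := by nlinarith
      linarith [heq ▸ hm]
    have h2 : 2 * b * L / (n:ℝ) < c / 2 := by
      have hm := mul_lt_mul_of_pos_left hLnn (by positivity : (0:ℝ) < 2 * b)
      have : 2 * b * L / (n:ℝ) = 2 * b * (L / n) := by ring
      rw [this]; nlinarith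
    have := max_lt h1 h2
    rw [hΦ]; linarith
  -- centered variables
  set Y : Fin n → Ω → ℝ := fun i ω => X i ω - μ θ0 with hYdef
  have hYm : ∀ i, Measurable (Y i) := fun i => (hX i).sub measurable_const
  have hYindep : iIndepFun Y P :=
    hIndep.comp (fun _ (x : ℝ) => x - μ θ0) (fun _ => measurable_id.sub measurable_const)
  have hYint : ∀ i, ∀ l : ℝ, |l| < 1 / b →
      Integrable (fun ω => Real.exp (l * Y i ω)) P := fun i l hl => hInt i l hl
  have hYmgf : ∀ i, ∀ l : ℝ, |l| < 1 / b →
      mgf (Y i) P l ≤ Real.exp (l ^ 2 * v ^ 2 / 2) := fun i l hl => hMGF i l hl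
  set Z : Fin n → Ω → ℝ := fun i ω => -(X i ω - μ θ0) with hZdef
  have hZm : ∀ i, Measurable (Z i) := fun i => (hYm i).neg
  have hZindep : iIndepFun Z P :=
    hYindep.comp (fun _ => Neg.neg) (fun _ => measurable_neg)
  have hZint : ∀ i, ∀ l : ℝ, |l| < 1 / b →
      Integrable (fun ω => Real.exp (l * Z i ω)) P := by
    intro i l hl
    have heq : (fun ω => Real.exp (l * Z i ω))
        = fun ω => Real.exp ((-l) * (X i ω - μ θ0)) := by
      funext ω
      congr 1
      show l * -(X i ω - μ θ0) = _
      ring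
    rw [heq]
    exact hInt i (-l) (by rwa [abs_neg])
  have hZmgf : ∀ i, ∀ l : ℝ, |l| < 1 / b →
      mgf (Z i) P l ≤ Real.exp (l ^ 2 * v ^ 2 / 2) := by
    intro i l hl
    have hZY : Z i = -(Y i) := by funext ω; simp [Z, Y]
    rw [hZY, mgf_neg]
    have h := hYmgf i (-l) (by rwa [abs_neg])
    simpa [neg_sq] using h
  -- tail bounds
  have hA := tail_opt P n Y hYm hYindep v b hv hb hYint hYmgf L Φ hL0.le hnpos hΦ1' hΦ2' hΦpos
  have hB := tail_opt P n Z hZm hZindep v b hv hb hZint hZmgf L Φ hL0.le hnpos hΦ1' hΦ2' hΦpos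
  -- the good event
  set G : Set Ω := {ω | |(1 / (n:ℝ)) * (∑ i, X i ω) - μ θ0| ≤ Φ} with hGdef
  have hfm : Measurable fun ω => (1 / (n:ℝ)) * (∑ i, X i ω) - μ θ0 :=
    ((Finset.measurable_sum Finset.univ (fun i _ => hX i)).const_mul _).sub measurable_const
  have hGm : MeasurableSet G := measurableSet_le hfm.abs measurable_const
  have hptY : ∀ ω, (∑ i, Y i ω) = (∑ i, X i ω) - (n:ℝ) * μ θ0 := by
    intro ω
    rw [show (∑ i, Y i ω) = ∑ i, (X i ω - μ θ0) from rfl, Finset.sum_sub_distrib,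
      Finset.sum_const, Finset.card_univ, Fintype.card_fin, nsmul_eq_mul]
  have hrescale : ∀ ω, (1 / (n:ℝ)) * (∑ i, X i ω) - μ θ0 = (1 / (n:ℝ)) * (∑ i, Y i ω) := by
    intro ω; rw [hptY ω]; field_simp
  have hcompl : Gᶜ ⊆ {ω | (n:ℝ) * Φ ≤ ∑ i, Y i ω} ∪ {ω | (n:ℝ) * Φ ≤ ∑ i, Z i ω} := by
    intro ω hω
    simp only [G, Set.mem_compl_iff, Set.mem_setOf_eq, not_le] at hω
    have hsumZ : ∑ i, Z i ω = -(∑ i, Y i ω) := by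
      simp [Z, Y, Finset.sum_neg_distrib]
    have habs : (n:ℝ) * Φ < |∑ i, Y i ω| := by
      rw [hrescale ω, abs_mul, abs_of_pos (one_div_pos.mpr hnpos)] at hω
      have hm := mul_lt_mul_of_pos_left hω hnpos
      have : (n:ℝ) * (1 / (n:ℝ) * |∑ i, Y i ω|) = |∑ i, Y i ω| := by field_simp
      linarith [hm.trans_eq this]
    rcases lt_abs.mp habs with h | h
    · exact Or.inl (le_of_lt h)
    · exact Or.inr (by simpa [hsumZ] using le_of_lt h)
  have hsub : G ⊆ {ω | {θ : Θ | |(1 / (n:ℝ)) * (∑ i, X i ω) - μ θ| ≤ Φ} = {θ0}} := by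
    intro ω hω
    simp only [G, Set.mem_setOf_eq] at hω ⊢
    apply Set.eq_singleton_iff_unique_mem.mpr
    refine ⟨hω, ?_⟩
    intro θ hθ
    by_contra hne
    have hcθ := hsep θ hne
    simp only [Set.mem_setOf_eq] at hθ
    have htri := abs_sub_le (μ θ) ((1 / (n:ℝ)) * (∑ i, X i ω)) (μ θ0)
    have h1 : |μ θ - (1 / (n:ℝ)) * (∑ i, X i ω)| = |(1 / (n:ℝ)) * (∑ i, X i ω) - μ θ| :=
      abs_sub_comm _ _
    linarith [htri, h1 ▸ htri]
  -- combine
  have hAe : P {ω | (n:ℝ) * Φ ≤ ∑ i, Y i ω} ≤ ENNReal.ofReal (Real.exp (-L)) := by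
    rw [← ENNReal.ofReal_toReal (measure_ne_top P _)]
    exact ENNReal.ofReal_le_ofReal hA
  have hBe : P {ω | (n:ℝ) * Φ ≤ ∑ i, Z i ω} ≤ ENNReal.ofReal (Real.exp (-L)) := by
    rw [← ENNReal.ofReal_toReal (measure_ne_top P _)]
    exact ENNReal.ofReal_le_ofReal hB
  have hexpL : Real.exp (-L) = 1 / (2 * M * T * Ψ) := by
    rw [hL, Real.exp_neg, Real.exp_log hMTΨ, one_div]
  have hGc : P Gᶜ ≤ ENNReal.ofReal (1 / (M * T * Ψ)) := by
    calc P Gᶜ ≤ P ({ω | (n:ℝ) * Φ ≤ ∑ i, Y i ω} ∪ {ω | (n:ℝ) * Φ ≤ ∑ i, Z i ω}) :=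
          measure_mono hcompl
      _ ≤ P {ω | (n:ℝ) * Φ ≤ ∑ i, Y i ω} + P {ω | (n:ℝ) * Φ ≤ ∑ i, Z i ω} :=
          measure_union_le _ _
      _ ≤ ENNReal.ofReal (Real.exp (-L)) + ENNReal.ofReal (Real.exp (-L)) :=
          add_le_add hAe hBe
      _ = ENNReal.ofReal (Real.exp (-L) + Real.exp (-L)) :=
          (ENNReal.ofReal_add (Real.exp_pos _).le (Real.exp_pos _).le).symm
      _ = ENNReal.ofReal (1 / (M * T * Ψ)) := by
          rw [hexpL]
          congr 1
          field_simp
          ring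
  have hPG : P G = 1 - P Gᶜ := by
    conv_lhs => rw [← compl_compl G]
    exact prob_compl_eq_one_sub hGm.compl
  calc P {ω | {θ : Θ | |(1 / (n:ℝ)) * (∑ i, X i ω) - μ θ| ≤ Φ} = {θ0}}
      ≥ P G := measure_mono hsub
    _ = 1 - P Gᶜ := hPG
    _ ≥ 1 - ENNReal.ofReal (1 / (M * T * Ψ)) := tsub_le_tsub_left hGc 1
end

section
/- Under the setup of the fixed-design identification theorem — (Ω, P) a probability space; X₁, …, Xₙ independent with mean μ(θ⁰) and E[exp(λ(Xᵢ − μ(θ⁰)))] ≤ exp(λ²v²/2) for |λ| < 1/b, v > 0, b > 0; Θ finite with θ⁰ ∈ Θ and μ : Θ → ℝ and |μ(θ) − μ(θ⁰)| ≥ c > 0 for θ ≠ θ⁰; Ψ(c) := min(c²/(8v²), c/(4b)); M, T > 0 with 2MTΨ(c) ≥ e; L := log(2MTΨ(c)) — let c' ≥ c, define Ψ(c') := min(c'²/(8v²), c'/(4b)), and suppose n ≥ L/Ψ(c'). With Φ := max(√(2v²L/n), 2bL/n) and S̄ := (1/n)·Σᵢ₌₁ⁿ Xᵢ, it holds that P({θ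 ∈ Θ : |S̄ − μ(θ)| ≤ Φ} ⊆ {θ⁰} ∪ {θ ∈ Θ : |μ(θ) − μ(θ⁰)| ≤ c'}) ≥ 1 − 1/(MTΨ(c)). -/
open MeasureTheory Real ProbabilityTheory

lemma my_chernoff_tail {Ω : Type*} [MeasurableSpace Ω] (P : Measure Ω) [IsProbabilityMeasure P]
    (n : ℕ) (Y : Fin n → Ω → ℝ) (hY : ∀ i, Measurable (Y i))
    (hIndep : iIndepFun Y P)
    (v b : ℝ) (hb : 0 < b)
    (hInt : ∀ i, ∀ l : ℝ, |l| < 1 / b → Integrable (fun ω => Real.exp (l * Y i ω)) P)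
    (hMGF : ∀ i, ∀ l : ℝ, |l| < 1 / b →
      (∫ ω, Real.exp (l * Y i ω) ∂P) ≤ Real.exp (l ^ 2 * v ^ 2 / 2))
    (t a : ℝ) (ht0 : 0 ≤ t) (htb : t < 1 / b) :
    (P {ω | a ≤ ∑ i, Y i ω}).toReal ≤ Real.exp (n * t ^ 2 * v ^ 2 / 2 - t * a) := by
  have ht' : |t| < 1 / b := by rwa [abs_of_nonneg ht0]
  have hint : ∀ i ∈ Finset.univ, Integrable (fun ω => Real.exp (t * Y i ω)) P :=
    fun i _ => hInt i t ht'
  have hS : Integrable (fun ω => Real.exp (t * (∑ i, Y i) ω)) P :=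
    hIndep.integrable_exp_mul_sum hY hint
  have h1 := measure_ge_le_exp_mul_mgf (μ := P) (X := ∑ i, Y i) a ht0 hS
  have hset : {ω | a ≤ ∑ i, Y i ω} = {ω | a ≤ (∑ i, Y i) ω} := by
    ext ω; simp [Finset.sum_apply]
  have h2 : mgf (∑ i, Y i) P t ≤ Real.exp (n * t ^ 2 * v ^ 2 / 2) := by
    rw [hIndep.mgf_sum hY]
    calc ∏ i, mgf (Y i) P t ≤ ∏ _i : Fin n, Real.exp (t ^ 2 * v ^ 2 / 2) :=
          Finset.prod_le_prod (fun i _ => mgf_nonneg) (fun i _ => hMGF i t ht')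
      _ = Real.exp (n * t ^ 2 * v ^ 2 / 2) := by
          rw [Finset.prod_const, Finset.card_univ, Fintype.card_fin, ← Real.exp_nat_mul]
          ring_nf
  calc (P {ω | a ≤ ∑ i, Y i ω}).toReal
      ≤ Real.exp (-t * a) * mgf (∑ i, Y i) P t := by rw [hset]; exact h1
    _ ≤ Real.exp (-t * a) * Real.exp (n * t ^ 2 * v ^ 2 / 2) := by
        exact mul_le_mul_of_nonneg_left h2 (exp_pos _).le
    _ = Real.exp (n * t ^ 2 * v ^ 2 / 2 - t * a) := by rw [← Real.exp_add]; ring_nf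

lemma my_chernoff_tail' {Ω : Type*} [MeasurableSpace Ω] (P : Measure Ω) [IsProbabilityMeasure P]
    (n : ℕ) (Y : Fin n → Ω → ℝ) (hY : ∀ i, Measurable (Y i))
    (hIndep : iIndepFun Y P)
    (v b : ℝ) (hb : 0 < b)
    (hInt : ∀ i, ∀ l : ℝ, |l| < 1 / b → Integrable (fun ω => Real.exp (l * Y i ω)) P)
    (hMGF : ∀ i, ∀ l : ℝ, |l| < 1 / b →
      (∫ ω, Real.exp (l * Y i ω) ∂P) ≤ Real.exp (l ^ 2 * v ^ 2 / 2))
    (lam a : ℝ) (h0 : 0 < lam) (hlb : lam ≤ 1 / b) :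
    (P {ω | a ≤ ∑ i, Y i ω}).toReal ≤ Real.exp (n * lam ^ 2 * v ^ 2 / 2 - lam * a) := by
  have hcont : ContinuousAt (fun t : ℝ => Real.exp ((n : ℝ) * t ^ 2 * v ^ 2 / 2 - t * a)) lam := by
    fun_prop
  refine ge_of_tendsto (hcont.tendsto.mono_left (nhdsWithin_le_nhds : nhdsWithin lam (Set.Iio lam) ≤ _)) ?_
  filter_upwards [Ioo_mem_nhdsLT_of_mem (Set.mem_Ioc.mpr ⟨h0, le_rfl⟩)] with t ht
  exact my_chernoff_tail P n Y hY hIndep v b hb hInt hMGF t a ht.1.le (lt_of_lt_of_le ht.2 hlb)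


set_option maxHeartbeats 1000000 in
/-- Fixed-design version of Theorem 2: once the data volume reaches
`log(2MTΨ(c))/Ψ(c')`, all candidate models farther than `c'` from the true mean
are excluded from the ambiguity set with probability at least `1 − 1/(MTΨ(c))`. -/
theorem ambiguity_set_subset_bounding_set_whp
    {Ω : Type*} [MeasurableSpace Ω] (P : Measure Ω) [IsProbabilityMeasure P]
    (n : ℕ) (X : Fin n → Ω → ℝ) (hX : ∀ i, Measurable (X i))
    (hIndep : iIndepFun X P)
    {Θ : Type*} [Fintype Θ] (θ0 : Θ) (μ : Θ → ℝ)
    (hMean : ∀ i, (∫ ω, X i ω ∂P) = μ θ0)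
    (v b : ℝ) (hv : 0 < v) (hb : 0 < b)
    (hInt : ∀ i, ∀ l : ℝ, |l| < 1 / b →
      Integrable (fun ω => Real.exp (l * (X i ω - μ θ0))) P)
    (hMGF : ∀ i, ∀ l : ℝ, |l| < 1 / b →
      (∫ ω, Real.exp (l * (X i ω - μ θ0)) ∂P) ≤ Real.exp (l ^ 2 * v ^ 2 / 2))
    (c : ℝ) (hc : 0 < c) (hsep : ∀ θ : Θ, θ ≠ θ0 → c ≤ |μ θ - μ θ0|)
    (Ψ : ℝ) (hΨ : Ψ = min (c ^ 2 / (8 * v ^ 2)) (c / (4 * b)))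
    (M T : ℝ) (hM : 0 < M) (hT : 0 < T) (hMT : Real.exp 1 ≤ 2 * M * T * Ψ)
    (L : ℝ) (hL : L = Real.log (2 * M * T * Ψ))
    (c' : ℝ) (hc' : c ≤ c')
    (Ψ' : ℝ) (hΨ' : Ψ' = min (c' ^ 2 / (8 * v ^ 2)) (c' / (4 * b)))
    (hn : (n : ℝ) ≥ L / Ψ')
    (Φ : ℝ) (hΦ : Φ = max (Real.sqrt (2 * v ^ 2 * L / n)) (2 * b * L / n)) :
    P {ω | {θ : Θ | |(1 / (n : ℝ)) * (∑ i, X i ω) - μ θ| ≤ Φ} ⊆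
        {θ0} ∪ {θ : Θ | |μ θ - μ θ0| ≤ c'}} ≥
      1 - ENNReal.ofReal (1 / (M * T * Ψ)) := by
  -- basic positivity facts
  have h2MTΨ : (0:ℝ) < 2 * M * T * Ψ := lt_of_lt_of_le (Real.exp_pos 1) hMT
  have hL1 : 1 ≤ L := by
    rw [hL]
    calc (1:ℝ) = Real.log (Real.exp 1) := (Real.log_exp 1).symm
      _ ≤ Real.log (2 * M * T * Ψ) := Real.log_le_log (Real.exp_pos 1) hMT
  have hc'pos : 0 < c' := lt_of_lt_of_le hc hc'
  have hΨ'pos : 0 < Ψ' := by rw [hΨ']; exact lt_min (by positivity) (by positivity)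
  have hnpos : (0:ℝ) < n :=
    lt_of_lt_of_le (div_pos (by linarith) hΨ'pos) hn
  have hLn' : L / n ≤ Ψ' := (div_le_iff₀ hnpos).mpr (by
    have := (div_le_iff₀ hΨ'pos).mp hn; linarith)
  have hΨ'1 : Ψ' ≤ c' ^ 2 / (8 * v ^ 2) := by rw [hΨ']; exact min_le_left _ _
  have hΨ'2 : Ψ' ≤ c' / (4 * b) := by rw [hΨ']; exact min_le_right _ _
  -- Φ ≤ c'/2
  have hv2 : (0:ℝ) < v ^ 2 := by positivity
  have hΦ1 : Real.sqrt (2 * v ^ 2 * L / n) ≤ c' / 2 := by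
    have h1 : 2 * v ^ 2 * L / n ≤ (c' / 2) ^ 2 := by
      have : 2 * v ^ 2 * L / n = 2 * v ^ 2 * (L / n) := by ring
      rw [this]
      have h2 : 2 * v ^ 2 * (L / n) ≤ 2 * v ^ 2 * Ψ' := by nlinarith
      have h3 : 2 * v ^ 2 * Ψ' ≤ 2 * v ^ 2 * (c' ^ 2 / (8 * v ^ 2)) := by nlinarith
      have h4 : 2 * v ^ 2 * (c' ^ 2 / (8 * v ^ 2)) = (c' / 2) ^ 2 := by
        field_simp; ring
      linarith
    calc Real.sqrt (2 * v ^ 2 * L / n) ≤ Real.sqrt ((c' / 2) ^ 2) := Real.sqrt_le_sqrt h1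
      _ = c' / 2 := Real.sqrt_sq (by positivity)
  have hΦ2 : 2 * b * L / n ≤ c' / 2 := by
    have : 2 * b * L / n = 2 * b * (L / n) := by ring
    rw [this]
    nlinarith [hΨ'2, hLn', hb, (by field_simp; ring : 2 * b * (c' / (4 * b)) = c' / 2)]
  have hΦc : Φ ≤ c' / 2 := by rw [hΦ]; exact max_le hΦ1 hΦ2
  have hΦge1 : Real.sqrt (2 * v ^ 2 * L / n) ≤ Φ := by rw [hΦ]; exact le_max_left _ _
  have hΦge2 : 2 * b * L / n ≤ Φ := by rw [hΦ]; exact le_max_right _ _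
  have hΦpos : 0 < Φ := lt_of_lt_of_le (by positivity) hΦge2
  have hΦsq : 2 * v ^ 2 * L ≤ n * Φ ^ 2 := by
    have h1 : 2 * v ^ 2 * L / n ≤ Φ ^ 2 := by
      have := pow_le_pow_left₀ (Real.sqrt_nonneg _) hΦge1 2
      rwa [Real.sq_sqrt (by positivity)] at this
    calc 2 * v ^ 2 * L = 2 * v ^ 2 * L / n * n := by field_simp
      _ ≤ Φ ^ 2 * n := by
          exact mul_le_mul_of_nonneg_right h1 hnpos.le
      _ = n * Φ ^ 2 := mul_comm _ _
  have hΦb : 2 * b * L ≤ n * Φ := by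
    calc 2 * b * L = 2 * b * L / n * n := by field_simp
      _ ≤ Φ * n := mul_le_mul_of_nonneg_right hΦge2 hnpos.le
      _ = n * Φ := mul_comm _ _
  -- the Chernoff exponent
  set lam : ℝ := min (Φ / v ^ 2) (1 / b) with hlamdef
  have hlam0 : 0 < lam := lt_min (by positivity) (by positivity)
  have hlamb : lam ≤ 1 / b := min_le_right _ _
  have hexp : (n : ℝ) * lam ^ 2 * v ^ 2 / 2 - lam * (n * Φ) ≤ -L := by
    rcases le_total (Φ / v ^ 2) (1 / b) with hle | hle
    · rw [hlamdef, min_eq_left hle]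
      have heq : (n : ℝ) * (Φ / v ^ 2) ^ 2 * v ^ 2 / 2 - (Φ / v ^ 2) * (n * Φ)
          = -(n * Φ ^ 2) / (2 * v ^ 2) := by field_simp; ring
      rw [heq, neg_div, neg_le_neg_iff]
      rw [le_div_iff₀ (by positivity)]
      linarith
    · rw [hlamdef, min_eq_right hle]
      have hvb : v ^ 2 ≤ b * Φ := by
        have := (div_le_div_iff₀ hb hv2).mp hle
        linarith
      have heq : (n : ℝ) * (1 / b) ^ 2 * v ^ 2 / 2 - (1 / b) * (n * Φ)
          = ((n : ℝ) * v ^ 2 - 2 * b * n * Φ) / (2 * b ^ 2) := by field_simp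
      rw [heq, div_le_iff₀ (by positivity)]
      have h1 : (n : ℝ) * v ^ 2 ≤ n * (b * Φ) :=
        mul_le_mul_of_nonneg_left hvb (Nat.cast_nonneg n)
      have h2 : b * (2 * b * L) ≤ b * (n * Φ) := mul_le_mul_of_nonneg_left hΦb hb.le
      nlinarith [h1, h2]
  -- tail bounds
  set Y : Fin n → Ω → ℝ := fun i ω => X i ω - μ θ0 with hYdef
  set Z : Fin n → Ω → ℝ := fun i ω => μ θ0 - X i ω with hZdef
  have hYmeas : ∀ i, Measurable (Y i) := fun i => (hX i).sub measurable_const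
  have hZmeas : ∀ i, Measurable (Z i) := fun i => measurable_const.sub (hX i)
  have hYindep : iIndepFun Y P := by
    have := hIndep.comp (fun _ (x : ℝ) => x - μ θ0) (fun _ => measurable_id.sub_const _)
    exact this
  have hZindep : iIndepFun Z P := by
    have := hIndep.comp (fun _ (x : ℝ) => μ θ0 - x) (fun _ => measurable_const.sub measurable_id)
    exact this
  have hZInt : ∀ i, ∀ l : ℝ, |l| < 1 / b → Integrable (fun ω => Real.exp (l * Z i ω)) P := by
    intro i l hl
    have := hInt i (-l) (by rwa [abs_neg])
    simpa [hZdef, show ∀ x : ℝ, l * (μ θ0 - x) = (-l) * (x - μ θ0) from fun x => by ring]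
      using this
  have hZMGF : ∀ i, ∀ l : ℝ, |l| < 1 / b →
      (∫ ω, Real.exp (l * Z i ω) ∂P) ≤ Real.exp (l ^ 2 * v ^ 2 / 2) := by
    intro i l hl
    have := hMGF i (-l) (by rwa [abs_neg])
    simpa [hZdef, show ∀ x : ℝ, l * (μ θ0 - x) = (-l) * (x - μ θ0) from fun x => by ring]
      using this
  have hexpΦ : Real.exp ((n : ℝ) * lam ^ 2 * v ^ 2 / 2 - lam * (n * Φ)) ≤ Real.exp (-L) :=
    Real.exp_le_exp.mpr hexp
  have htailY : (P {ω | (n : ℝ) * Φ ≤ ∑ i, Y i ω}).toReal ≤ Real.exp (-L) :=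
    le_trans (my_chernoff_tail' P n Y hYmeas hYindep v b hb hInt hMGF lam ((n : ℝ) * Φ)
      hlam0 hlamb) hexpΦ
  have htailZ : (P {ω | (n : ℝ) * Φ ≤ ∑ i, Z i ω}).toReal ≤ Real.exp (-L) :=
    le_trans (my_chernoff_tail' P n Z hZmeas hZindep v b hb hZInt hZMGF lam ((n : ℝ) * Φ)
      hlam0 hlamb) hexpΦ
  -- set inclusions
  set F : Set Ω := {ω | |(1 / (n : ℝ)) * (∑ i, X i ω) - μ θ0| ≤ Φ} with hFdef
  set A : Set Ω := {ω | (n : ℝ) * Φ ≤ ∑ i, Y i ω} with hAdef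
  set B : Set Ω := {ω | (n : ℝ) * Φ ≤ ∑ i, Z i ω} with hBdef
  have hsumY : ∀ ω, (1 / (n : ℝ)) * (∑ i, X i ω) - μ θ0 = (∑ i, Y i ω) / n := by
    intro ω
    have : ∑ i, Y i ω = (∑ i, X i ω) - n * μ θ0 := by
      simp [hYdef, Finset.sum_sub_distrib, Finset.card_univ, mul_comm]
    rw [this]; field_simp
  have hZY : ∀ ω, ∑ i, Z i ω = -∑ i, Y i ω := by
    intro ω
    rw [← Finset.sum_neg_distrib]
    exact Finset.sum_congr rfl fun i _ => by simp [hYdef, hZdef]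
  have hFE : F ⊆ {ω | {θ : Θ | |(1 / (n : ℝ)) * (∑ i, X i ω) - μ θ| ≤ Φ} ⊆
      {θ0} ∪ {θ : Θ | |μ θ - μ θ0| ≤ c'}} := by
    intro ω hω θ hθ
    refine Set.mem_union_right _ ?_
    have h1 : |(1 / (n : ℝ)) * (∑ i, X i ω) - μ θ0| ≤ Φ := hω
    have h2 : |(1 / (n : ℝ)) * (∑ i, X i ω) - μ θ| ≤ Φ := hθ
    have : |μ θ - μ θ0| ≤ c' := by
      calc |μ θ - μ θ0|
          = |((1 / (n : ℝ)) * (∑ i, X i ω) - μ θ0) - ((1 / (n : ℝ)) * (∑ i, X i ω) - μ θ)| := by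
            congr 1; ring
        _ ≤ |(1 / (n : ℝ)) * (∑ i, X i ω) - μ θ0| + |(1 / (n : ℝ)) * (∑ i, X i ω) - μ θ| :=
            abs_sub _ _
        _ ≤ Φ + Φ := add_le_add h1 h2
        _ ≤ c' := by linarith
    exact this
  have hFcAB : Fᶜ ⊆ A ∪ B := by
    intro ω hω
    have hω' : Φ < |(1 / (n : ℝ)) * (∑ i, X i ω) - μ θ0| := lt_of_not_ge hω
    rw [hsumY ω, abs_div, abs_of_pos hnpos] at hω'
    have hnΦ : (n : ℝ) * Φ < |∑ i, Y i ω| := by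
      rw [lt_div_iff₀ hnpos] at hω'; linarith
    rcases abs_cases (∑ i, Y i ω) with ⟨habs, _⟩ | ⟨habs, _⟩
    · exact Or.inl (show (n : ℝ) * Φ ≤ ∑ i, Y i ω by rw [← habs]; exact hnΦ.le)
    · right
      show (n : ℝ) * Φ ≤ ∑ i, Z i ω
      rw [hZY ω, ← habs]; exact le_of_lt hnΦ
  -- measurability of F
  have hFmeas : MeasurableSet F := by
    apply measurableSet_le
    · exact ((measurable_const.mul (Finset.measurable_sum Finset.univ
        fun i _ => hX i)).sub measurable_const).abs
    · exact measurable_const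
  -- probability bound on the complement
  have hA : P A ≤ ENNReal.ofReal (Real.exp (-L)) := by
    rw [← ENNReal.ofReal_toReal (measure_ne_top P A)]
    exact ENNReal.ofReal_le_ofReal htailY
  have hB : P B ≤ ENNReal.ofReal (Real.exp (-L)) := by
    rw [← ENNReal.ofReal_toReal (measure_ne_top P B)]
    exact ENNReal.ofReal_le_ofReal htailZ
  have hcompl : P Fᶜ ≤ ENNReal.ofReal (1 / (M * T * Ψ)) := by
    calc P Fᶜ ≤ P (A ∪ B) := measure_mono hFcAB
      _ ≤ P A + P B := measure_union_le _ _
      _ ≤ ENNReal.ofReal (Real.exp (-L)) + ENNReal.ofReal (Real.exp (-L)) := add_le_add hA hB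
      _ = ENNReal.ofReal (Real.exp (-L) + Real.exp (-L)) :=
          (ENNReal.ofReal_add (Real.exp_pos _).le (Real.exp_pos _).le).symm
      _ = ENNReal.ofReal (1 / (M * T * Ψ)) := by
          congr 1
          rw [Real.exp_neg, hL, Real.exp_log h2MTΨ]
          have hMTΨ : (0:ℝ) < M * T * Ψ := by nlinarith
          field_simp
          ring
  calc (1 : ENNReal) - ENNReal.ofReal (1 / (M * T * Ψ)) ≤ 1 - P Fᶜ := tsub_le_tsub_left hcompl 1
    _ = P F := by
        rw [prob_compl_eq_one_sub hFmeas, ENNReal.sub_sub_cancel ENNReal.one_ne_top prob_le_one]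
    _ ≤ P {ω | {θ : Θ | |(1 / (n : ℝ)) * (∑ i, X i ω) - μ θ| ≤ Φ} ⊆
        {θ0} ∪ {θ : Θ | |μ θ - μ θ0| ≤ c'}} := measure_mono hFE
end
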